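/- arXiv:2209.12237 — 2 statements merged into one kernel-verified Lean document; each statement's English description precedes it below -/
import Mathlib

section
/- Let γ(s,τ) = ( r_* cos((−s−a₁τ)/√(k²+r_*²)), r_* sin((−s−a₁τ)/√(k²+r_*²)), (ks−b₁τ)/√(k²+r_*²) ) with a₁ = dk/(4π(k²+r_*²)) and b₁ = dr_*²/(4π(k²+r_*²)). Then γ satisfies the binormal curvature flow equation ∂_τ γ = (d/(4π)) (∂_s γ × ∂_{ss} γ). -/
open Real

noncomputable def helix (k rstar d : ℝ) (s τ : ℝ) : Fin 3 → ℝ :=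
  ![rstar * Real.cos ((-s - d * k / (4 * π * (k ^ 2 + rstar ^ 2)) * τ) / Real.sqrt (k ^ 2 + rstar ^ 2)),
    rstar * Real.sin ((-s - d * k / (4 * π * (k ^ 2 + rstar ^ 2)) * τ) / Real.sqrt (k ^ 2 + rstar ^ 2)),
    (k * s - d * rstar ^ 2 / (4 * π * (k ^ 2 + rstar ^ 2)) * τ) / Real.sqrt (k ^ 2 + rstar ^ 2)]

private lemma hda (p q c x : ℝ) : HasDerivAt (fun t : ℝ => (p - q * t) / c) (-q / c) x := by
  simpa using (((hasDerivAt_id x).const_mul q).const_sub p).div_const c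

private lemma hdb (p c x : ℝ) : HasDerivAt (fun t : ℝ => (-t - p) / c) (-1 / c) x := by
  simpa using (((hasDerivAt_id x).neg.sub_const p).div_const c)

private lemma hdc (k p c x : ℝ) : HasDerivAt (fun t : ℝ => (k * t - p) / c) (k / c) x := by
  simpa using (((hasDerivAt_id x).const_mul k).sub_const p).div_const c

theorem helix_binormal_flow (k rstar d : ℝ) (hk : 0 < k) (hr : 0 < rstar) (hd : 0 < d)
    (s τ : ℝ) :
    (fun i => deriv (fun t => helix k rstar d s t i) τ) =
      (d / (4 * π)) •
        crossProduct (fun i => deriv (fun u => helix k rstar d u τ i) s)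
          (fun i => deriv (fun u => deriv (fun u' => helix k rstar d u' τ i) u) s) := by
  have hQ : (0:ℝ) < k ^ 2 + rstar ^ 2 := by positivity
  have hπ : (π:ℝ) ≠ 0 := Real.pi_ne_zero
  simp only [helix]
  set A : ℝ := d * k / (4 * π * (k ^ 2 + rstar ^ 2)) with hA
  set B : ℝ := d * rstar ^ 2 / (4 * π * (k ^ 2 + rstar ^ 2)) with hB
  set c : ℝ := Real.sqrt (k ^ 2 + rstar ^ 2) with hcdef
  have hc : 0 < c := Real.sqrt_pos.mpr hQ
  have hc2 : c ^ 2 = k ^ 2 + rstar ^ 2 := Real.sq_sqrt hQ.le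
  have hT0 : deriv (fun t => rstar * Real.cos ((-s - A * t) / c)) τ
      = rstar * (-Real.sin ((-s - A * τ) / c) * (-A / c)) :=
    (((hda (-s) A c τ).cos).const_mul rstar).deriv
  have hT1 : deriv (fun t => rstar * Real.sin ((-s - A * t) / c)) τ
      = rstar * (Real.cos ((-s - A * τ) / c) * (-A / c)) :=
    (((hda (-s) A c τ).sin).const_mul rstar).deriv
  have hT2 : deriv (fun t => (k * s - B * t) / c) τ = -B / c := (hda (k * s) B c τ).deriv
  have hS0 : deriv (fun u => rstar * Real.cos ((-u - A * τ) / c)) s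
      = rstar * (-Real.sin ((-s - A * τ) / c) * (-1 / c)) :=
    (((hdb (A * τ) c s).cos).const_mul rstar).deriv
  have hS1 : deriv (fun u => rstar * Real.sin ((-u - A * τ) / c)) s
      = rstar * (Real.cos ((-s - A * τ) / c) * (-1 / c)) :=
    (((hdb (A * τ) c s).sin).const_mul rstar).deriv
  have hS2 : deriv (fun u => (k * u - B * τ) / c) s = k / c := (hdc k (B * τ) c s).deriv
  have e0 : (fun u => deriv (fun u' => rstar * Real.cos ((-u' - A * τ) / c)) u)
      = fun u => rstar * (-Real.sin ((-u - A * τ) / c) * (-1 / c)) :=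
    funext fun u => (((hdb (A * τ) c u).cos).const_mul rstar).deriv
  have e1 : (fun u => deriv (fun u' => rstar * Real.sin ((-u' - A * τ) / c)) u)
      = fun u => rstar * (Real.cos ((-u - A * τ) / c) * (-1 / c)) :=
    funext fun u => (((hdb (A * τ) c u).sin).const_mul rstar).deriv
  have e2 : (fun u => deriv (fun u' => (k * u' - B * τ) / c) u) = fun _ => k / c :=
    funext fun u => (hdc k (B * τ) c u).deriv
  have hSS0 : deriv (fun u => rstar * (-Real.sin ((-u - A * τ) / c) * (-1 / c))) s
      = rstar * (-(Real.cos ((-s - A * τ) / c) * (-1 / c)) * (-1 / c)) :=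
    ((((hdb (A * τ) c s).sin).neg.mul_const (-1 / c)).const_mul rstar).deriv
  have hSS1 : deriv (fun u => rstar * (Real.cos ((-u - A * τ) / c) * (-1 / c))) s
      = rstar * ((-Real.sin ((-s - A * τ) / c) * (-1 / c)) * (-1 / c)) :=
    ((((hdb (A * τ) c s).cos).mul_const (-1 / c)).const_mul rstar).deriv
  have hSS2 : deriv (fun _ : ℝ => k / c) s = 0 := deriv_const _ _
  funext i
  fin_cases i <;>
    simp only [Fin.zero_eta, Fin.mk_one, show (⟨2, by omega⟩ : Fin 3) = 2 from rfl,
      Fin.isValue, Matrix.cons_val_zero, Matrix.cons_val_one, Matrix.head_cons,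
      Matrix.cons_val_two, Matrix.tail_cons, crossProduct, LinearMap.mk₂_apply,
      Pi.smul_apply, smul_eq_mul, hT0, hT1, hT2, hS0, hS1, hS2, e0, e1, e2, hSS0, hSS1, hSS2]
  · set S := Real.sin ((-s - A * τ) / c)
    rw [hA]
    field_simp
    linear_combination (S * k) * hc2
  · set C := Real.cos ((-s - A * τ) / c)
    rw [hA]
    field_simp
    linear_combination (-(C * k)) * hc2
  · set S := Real.sin ((-s - A * τ) / c)
    set C := Real.cos ((-s - A * τ) / c)
    have hsc : S ^ 2 + C ^ 2 = 1 := Real.sin_sq_add_cos_sq _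
    rw [hB]
    field_simp
    linear_combination (-1) * hc2 +
      (k ^ 2 + rstar ^ 2) * hsc
end

section
/- Let ω ∈ L¹(ℝ²) with 0 ≤ ω ≤ 1/ε², ∫ ω = d, and supp(ω) ⊆ B_r(0) for some r ≤ 1. Then ∬ ln(1/|x−y|) ω(x)ω(y) dx dy ≤ d² ln(1/ε) + C for a constant C = C(d) depending only on d, by the Riesz rearrangement inequality: the double integral is maximized when ω is replaced by its symmetric decreasing rearrangement (1/ε²)1_{B_{ρ}(0)} with πρ² = dε², and for that patch the double integral equals d² ln(1/ε) + O(1). -/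
open MeasureTheory Real Set

local notation "E2" => EuclideanSpace ℝ (Fin 2)

lemma aux_h (ε : ℝ) (hε : 0 < ε) (x : E2) :
    Integrable (fun y : E2 => max 0 (Real.log (ε / ‖x - y‖))) ∧
    ∫ y : E2, max 0 (Real.log (ε / ‖x - y‖)) ≤ π * ε ^ 2 := by
  set h : E2 → ℝ := fun y => max 0 (Real.log (ε / ‖x - y‖)) with hh
  have hmeas : Measurable h := by
    apply measurable_const.max
    exact Real.measurable_log.comp (measurable_const.div (measurable_const.sub measurable_id).norm)
  have hnn : ∀ y, 0 ≤ h y := fun y => le_max_left _ _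
  -- layer cake bound
  have hsubset : ∀ t : ℝ, 0 < t → {y : E2 | t ≤ h y} ⊆ Metric.closedBall x (ε * Real.exp (-t)) := by
    intro t ht y hy
    have hL : t ≤ Real.log (ε / ‖x - y‖) := by
      have hy' : t ≤ h y := hy
      rcases le_max_iff.mp hy' with h1 | h1
      · linarith
      · exact h1
    have hs : 0 < ‖x - y‖ := by
      rcases (norm_nonneg (x - y)).lt_or_eq with h2 | h2
      · exact h2
      · exfalso; rw [← h2, div_zero, Real.log_zero] at hL; linarith
    have hexp : Real.exp t ≤ ε / ‖x - y‖ := by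
      have := Real.exp_le_exp.mpr hL
      rwa [Real.exp_log (by positivity)] at this
    have : ‖x - y‖ * Real.exp t ≤ ε := by
      rw [mul_comm]
      exact (le_div_iff₀ hs).mp hexp
    rw [Metric.mem_closedBall, dist_eq_norm, ← norm_neg, neg_sub]
    rw [Real.exp_neg, mul_comm ε, ← div_eq_inv_mul]
    rw [le_div_iff₀ (Real.exp_pos t)]
    linarith
  have hvol : ∀ t : ℝ, 0 < t →
      volume (Metric.closedBall x (ε * Real.exp (-t))) ≤ ENNReal.ofReal (π * ε ^ 2 * Real.exp (-t)) := by
    intro t ht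
    rw [EuclideanSpace.volume_closedBall]
    have hcard : (Fintype.card (Fin 2) : ℝ) = 2 := by simp
    rw [show (Fintype.card (Fin 2)) = 2 from Fintype.card_fin 2]
    rw [show ((2:ℕ) : ℝ) / 2 + 1 = 2 by norm_num, Real.Gamma_two]
    have h1 : (0:ℝ) ≤ ε * Real.exp (-t) := by positivity
    rw [← ENNReal.ofReal_pow h1, ← ENNReal.ofReal_mul (by positivity)]
    apply ENNReal.ofReal_le_ofReal
    have hsq : Real.sqrt π ^ 2 = π := Real.sq_sqrt pi_pos.le
    rw [hsq]
    have he : Real.exp (-t) ≤ 1 := Real.exp_le_one_iff.mpr (by linarith)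
    have he0 : 0 < Real.exp (-t) := Real.exp_pos _
    rw [div_one]
    calc (ε * Real.exp (-t)) ^ 2 * π = π * ε ^ 2 * (Real.exp (-t) * Real.exp (-t)) := by ring
      _ ≤ π * ε ^ 2 * (Real.exp (-t) * 1) := by
          apply mul_le_mul_of_nonneg_left (by nlinarith) (by positivity)
      _ = π * ε ^ 2 * Real.exp (-t) := by ring
  have hexpint : Integrable (fun t : ℝ => π * ε ^ 2 * Real.exp (-t)) (volume.restrict (Ioi 0)) := by
    have := exp_neg_integrableOn_Ioi 0 (one_pos)
    simp only [neg_one_mul] at this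
    exact (this.const_mul (π * ε ^ 2))
  have key : ∫⁻ y : E2, ENNReal.ofReal (h y) ≤ ENNReal.ofReal (π * ε ^ 2) := by
    rw [lintegral_eq_lintegral_meas_le volume (Filter.Eventually.of_forall hnn) hmeas.aemeasurable]
    calc ∫⁻ t in Ioi (0:ℝ), volume {a : E2 | t ≤ h a}
        ≤ ∫⁻ t in Ioi (0:ℝ), ENNReal.ofReal (π * ε ^ 2 * Real.exp (-t)) := by
          apply setLIntegral_mono
          · exact (Measurable.ennreal_ofReal (by fun_prop))
          · intro t ht
            exact le_trans (measure_mono (hsubset t ht)) (hvol t ht)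
      _ = ENNReal.ofReal (∫ t in Ioi (0:ℝ), π * ε ^ 2 * Real.exp (-t)) := by
          rw [← ofReal_integral_eq_lintegral_ofReal hexpint
            (Filter.Eventually.of_forall (fun t => by positivity))]
      _ = ENNReal.ofReal (π * ε ^ 2) := by
          rw [integral_const_mul, integral_exp_neg_Ioi_zero, mul_one]
  have hint : Integrable h := by
    refine ⟨hmeas.aestronglyMeasurable, ?_⟩
    rw [HasFiniteIntegral, lintegral_enorm_of_nonneg hnn]
    exact lt_of_le_of_lt key ENNReal.ofReal_lt_top
  refine ⟨hint, ?_⟩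
  have := ofReal_integral_eq_lintegral_ofReal hint (Filter.Eventually.of_forall hnn)
  rw [← this] at key
  exact (ENNReal.ofReal_le_ofReal_iff (by positivity)).mp key

theorem log_energy_upper_bound (d : ℝ) (hd : 0 < d) :
    ∃ C : ℝ, ∀ ε : ℝ, 0 < ε → ε < 1 →
      ∀ (ω : EuclideanSpace ℝ (Fin 2) → ℝ) (r : ℝ), Measurable ω →
        (∀ x, 0 ≤ ω x) → (∀ x, ω x ≤ 1 / ε ^ 2) →
        (∫ x, ω x = d) → r ≤ 1 →
        Function.support ω ⊆ Metric.ball (0 : EuclideanSpace ℝ (Fin 2)) r →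
        ∫ x, ∫ y, Real.log (1 / ‖x - y‖) * ω x * ω y ≤
          d ^ 2 * Real.log (1 / ε) + C := by
  use d * π
  intro ε hε hε1 ω r hmeas hnn hub hintω hr hsupp
  have hεsq : (0:ℝ) < ε ^ 2 := by positivity
  have hlog : 0 < Real.log (1 / ε) := Real.log_pos (one_lt_one_div hε hε1)
  -- ω is integrable
  have hsupp1 : Function.support ω ⊆ Metric.ball (0 : E2) 1 :=
    hsupp.trans (Metric.ball_subset_ball hr)
  have hωint : Integrable ω := by
    rw [← integrableOn_iff_integrable_of_support_subset hsupp1]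
    apply Measure.integrableOn_of_bounded (M := 1 / ε ^ 2) measure_ball_lt_top.ne
      hmeas.aestronglyMeasurable
    filter_upwards with y
    rw [Real.norm_eq_abs, abs_of_nonneg (hnn y)]
    exact hub y
  set B : ℝ := d * Real.log (1 / ε) + π with hB
  have hBpos : 0 < B := by positivity
  -- inner bound
  have hI : ∀ x : E2, ∫ y, Real.log (1 / ‖x - y‖) * ω y ≤ B := by
    intro x
    obtain ⟨hhint, hhle⟩ := aux_h ε hε x
    set h : E2 → ℝ := fun y => max 0 (Real.log (ε / ‖x - y‖)) with hh
    have hg : Integrable (fun y => Real.log (1 / ε) * ω y + (1 / ε ^ 2) * h y) :=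
      (hωint.const_mul _).add (hhint.const_mul _)
    have hptwise : ∀ y, Real.log (1 / ‖x - y‖) * ω y ≤
        Real.log (1 / ε) * ω y + (1 / ε ^ 2) * h y := by
      intro y
      have hmax : 0 ≤ h y := le_max_left _ _
      rcases (norm_nonneg (x - y)).lt_or_eq with hs | hs
      · have hkey : Real.log (1 / ‖x - y‖) ≤ Real.log (1 / ε) + h y := by
          have h1 : Real.log (1 / ‖x - y‖) = -Real.log ‖x - y‖ := by
            rw [one_div, Real.log_inv]
          have h2 : Real.log (1 / ε) = -Real.log ε := by rw [one_div, Real.log_inv]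
          have h3 : Real.log (ε / ‖x - y‖) = Real.log ε - Real.log ‖x - y‖ :=
            Real.log_div (ne_of_gt hε) (ne_of_gt hs)
          have h4 : Real.log (ε / ‖x - y‖) ≤ h y := le_max_right _ _
          rw [h1, h2]; linarith
        have step1 : Real.log (1 / ‖x - y‖) * ω y ≤ (Real.log (1 / ε) + h y) * ω y :=
          mul_le_mul_of_nonneg_right hkey (hnn y)
        have step2 : h y * ω y ≤ (1 / ε ^ 2) * h y := by
          rw [mul_comm (1 / ε ^ 2)]
          exact mul_le_mul_of_nonneg_left (hub y) hmax
        nlinarith [hnn y]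
      · rw [← hs, div_zero, Real.log_zero, zero_mul]
        have : 0 ≤ Real.log (1 / ε) * ω y := mul_nonneg hlog.le (hnn y)
        have : 0 ≤ (1 / ε ^ 2) * h y := mul_nonneg (by positivity) hmax
        linarith
    by_cases hf : Integrable (fun y => Real.log (1 / ‖x - y‖) * ω y)
    · calc ∫ y, Real.log (1 / ‖x - y‖) * ω y
          ≤ ∫ y, (Real.log (1 / ε) * ω y + (1 / ε ^ 2) * h y) :=
            integral_mono hf hg hptwise
        _ = Real.log (1 / ε) * d + (1 / ε ^ 2) * ∫ y, h y := by
            rw [integral_add (hωint.const_mul _) (hhint.const_mul _),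
              integral_const_mul, integral_const_mul, hintω]
        _ ≤ B := by
            have h5 : (1 / ε ^ 2) * ∫ y, h y ≤ (1 / ε ^ 2) * (π * ε ^ 2) :=
              mul_le_mul_of_nonneg_left hhle (by positivity)
            have h6 : (1 / ε ^ 2) * (π * ε ^ 2) = π := by field_simp
            rw [hB]; linarith [h5, h6 ▸ h5]
    · rw [integral_undef hf]
      exact hBpos.le
  -- outer bound
  have hre : ∀ x : E2, ∫ y, Real.log (1 / ‖x - y‖) * ω x * ω y
      = ω x * ∫ y, Real.log (1 / ‖x - y‖) * ω y := by
    intro x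
    rw [← integral_const_mul]
    congr 1 with y
    ring
  simp only [hre]
  have hgout : Integrable (fun x => ω x * B) := hωint.mul_const _
  have hptw : ∀ x, ω x * (∫ y, Real.log (1 / ‖x - y‖) * ω y) ≤ ω x * B := by
    intro x
    exact mul_le_mul_of_nonneg_left (hI x) (hnn x)
  have hfinal : ∫ x, ω x * (∫ y, Real.log (1 / ‖x - y‖) * ω y) ≤ d * B := by
    by_cases hf : Integrable (fun x => ω x * ∫ y, Real.log (1 / ‖x - y‖) * ω y)
    · calc ∫ x, ω x * (∫ y, Real.log (1 / ‖x - y‖) * ω y)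
          ≤ ∫ x, ω x * B := integral_mono hf hgout hptw
        _ = d * B := by rw [integral_mul_const, hintω]
    · rw [integral_undef hf]
      positivity
  calc ∫ x, ω x * (∫ y, Real.log (1 / ‖x - y‖) * ω y) ≤ d * B := hfinal
    _ = d ^ 2 * Real.log (1 / ε) + d * π := by rw [hB]; ring
end
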